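/- Any nonzero continuous quasiperiodic function F on R × R (i.e., satisfying F(x+1,ω) = e^{2πiω}F(x,ω) and F(x,ω+1) = F(x,ω)) must vanish somewhere: there exists (x0, ω0) with F(x0, ω0) = 0. -/

import Mathlib

open Complex

/-- Any nonzero continuous quasiperiodic function on `ℝ × ℝ` must vanish somewhere. -/
theorem quasiperiodic_has_zero (F : ℝ → ℝ → ℂ)
    (hcont : Continuous fun p : ℝ × ℝ => F p.1 p.2)
    (hq1 : ∀ x ω : ℝ, F (x + 1) ω = Complex.exp (2 * Real.pi * Complex.I * ω) * F x ω)
    (hq2 : ∀ x ω : ℝ, F x (ω + 1) = F x ω)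
    (hne : ∃ x ω : ℝ, F x ω ≠ 0) :
    ∃ x₀ ω₀ : ℝ, F x₀ ω₀ = 0 := by
  by_contra hcon
  push_neg at hcon
  set K : Set (ℝ × ℝ) := Set.Icc (0:ℝ) 1 ×ˢ Set.Icc (0:ℝ) 1 with hKdef
  have hK : IsCompact K := isCompact_Icc.prod isCompact_Icc
  have hKne : K.Nonempty := ⟨(0, 0), by simp [hKdef]⟩
  -- minimum of ‖F‖ on K
  have hmin : ∃ m : ℝ, 0 < m ∧ ∀ p ∈ K, m ≤ ‖F p.1 p.2‖ := by
    obtain ⟨p₀, hp₀K, hp₀⟩ := hK.exists_isMinOn hKne (hcont.norm.continuousOn)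
    exact ⟨‖F p₀.1 p₀.2‖, norm_pos_iff.mpr (hcon _ _), fun p hp => hp₀ hp⟩
  obtain ⟨m, hmpos, hmle⟩ := hmin
  -- uniform continuity on K
  obtain ⟨δ, hδpos, hδ⟩ := Metric.uniformContinuousOn_iff.mp
    (hK.uniformContinuousOn_of_continuous hcont.continuousOn) m hmpos
  -- choose n
  obtain ⟨n₁, hn₁⟩ := exists_nat_gt (1/δ)
  set n : ℕ := max n₁ 5 with hn
  have hn5 : (5:ℕ) ≤ n := le_max_right _ _
  have hnpos : (0:ℝ) < n := by positivity
  have hninv : (1:ℝ)/n < δ := by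
    rw [div_lt_iff₀ hnpos]
    have h1 : 1/δ < (n:ℝ) := lt_of_lt_of_le hn₁ (by exact_mod_cast le_max_left n₁ 5)
    calc (1:ℝ) = (1/δ) * δ := by field_simp
    _ < (n:ℝ) * δ := mul_lt_mul_of_pos_right h1 hδpos
    _ = δ * n := mul_comm _ _
  set r : ℕ → ℝ → ℂ := fun k x => F x (((k:ℝ)+1)/n) / F x ((k:ℝ)/n) with hr
  have hrne : ∀ k x, r k x ≠ 0 := fun k x => div_ne_zero (hcon _ _) (hcon _ _)
  set W : ℝ → ℂ := fun x => ∑ k ∈ Finset.range n, Complex.log (r k x) with hW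
  -- ball estimate
  have hball : ∀ x ∈ Set.Icc (0:ℝ) 1, ∀ k < n, ‖r k x - 1‖ < 1 := by
    intro x hx k hk
    have hk1 : ((k:ℝ)+1)/n ∈ Set.Icc (0:ℝ) 1 := by
      constructor
      · positivity
      · rw [div_le_one hnpos]; exact_mod_cast Nat.succ_le_of_lt hk
    have hk0 : (k:ℝ)/n ∈ Set.Icc (0:ℝ) 1 := by
      constructor
      · positivity
      · rw [div_le_one hnpos]; exact_mod_cast hk.le
    have hmem1 : ((x, ((k:ℝ)+1)/n) : ℝ × ℝ) ∈ K := ⟨hx, hk1⟩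
    have hmem0 : ((x, (k:ℝ)/n) : ℝ × ℝ) ∈ K := ⟨hx, hk0⟩
    have hdist : dist ((x, ((k:ℝ)+1)/n) : ℝ × ℝ) (x, (k:ℝ)/n) < δ := by
      rw [Prod.dist_eq, dist_self, Real.dist_eq,
        show ((k:ℝ)+1)/n - (k:ℝ)/n = 1/n by ring,
        abs_of_pos (by positivity), max_eq_right (by positivity)]
      exact hninv
    have hnum : ‖F x (((k:ℝ)+1)/n) - F x ((k:ℝ)/n)‖ < m := by
      have h := hδ _ hmem1 _ hmem0 hdist
      simpa [dist_eq_norm] using h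
    have hden : m ≤ ‖F x ((k:ℝ)/n)‖ := by simpa using hmle _ hmem0
    have hdne : F x ((k:ℝ)/n) ≠ 0 := hcon _ _
    have heq : r k x - 1 = (F x (((k:ℝ)+1)/n) - F x ((k:ℝ)/n)) / F x ((k:ℝ)/n) := by
      simp only [hr]
      rw [sub_div, div_self hdne]
    rw [heq, norm_div, div_lt_one (lt_of_lt_of_le hmpos hden)]
    exact lt_of_lt_of_le hnum hden
  -- consequences of ball estimate
  have hre : ∀ x ∈ Set.Icc (0:ℝ) 1, ∀ k < n, 0 < (r k x).re := by
    intro x hx k hk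
    have h := hball x hx k hk
    have h2 : |(r k x - 1).re| ≤ ‖r k x - 1‖ := Complex.abs_re_le_norm _
    have h3 : (r k x - 1).re = (r k x).re - 1 := by simp
    have h4 := (abs_lt.mp (lt_of_le_of_lt h2 h)).1
    linarith
  have hslit : ∀ x ∈ Set.Icc (0:ℝ) 1, ∀ k < n, r k x ∈ Complex.slitPlane :=
    fun x hx k hk => Complex.mem_slitPlane_iff.mpr (Or.inl (hre x hx k hk))
  -- telescoping: exp (W x) = 1
  have htel : ∀ x : ℝ, ∀ M : ℕ, ∏ k ∈ Finset.range M, r k x = F x ((M:ℝ)/n) / F x 0 := by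
    intro x M
    induction M with
    | zero => simp [div_self (hcon x 0)]
    | succ M ih =>
      rw [Finset.prod_range_succ, ih]
      simp only [hr]
      have h0 : F x 0 ≠ 0 := hcon x 0
      have h1 : F x ((M:ℝ)/n) ≠ 0 := hcon _ _
      push_cast
      field_simp
  have hexpW : ∀ x : ℝ, Complex.exp (W x) = 1 := by
    intro x
    simp only [hW]
    rw [Complex.exp_sum]
    have : ∀ k ∈ Finset.range n, Complex.exp (Complex.log (r k x)) = r k x :=
      fun k _ => Complex.exp_log (hrne k x)
    rw [Finset.prod_congr rfl this, htel x n]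
    have hnn : ((n:ℝ))/n = 1 := div_self (ne_of_gt hnpos)
    rw [hnn]
    have : F x 1 = F x 0 := by
      have := hq2 x 0
      simpa using this
    rw [this, div_self (hcon x 0)]
  have hint : ∀ x : ℝ, ∃ j : ℤ, W x = (j : ℂ) * (2 * Real.pi * I) :=
    fun x => Complex.exp_eq_one_iff.mp (hexpW x)
  -- continuity of W on [0,1]
  have hWcont : ContinuousOn W (Set.Icc (0:ℝ) 1) := by
    simp only [hW]
    apply continuousOn_finset_sum
    intro k hk
    rw [Finset.mem_range] at hk
    have hrc : Continuous (r k) := by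
      apply Continuous.div
      · exact hcont.comp (continuous_id.prodMk continuous_const)
      · exact hcont.comp (continuous_id.prodMk continuous_const)
      · exact fun x => hcon _ _
    exact ContinuousOn.clog hrc.continuousOn (fun x hx => hslit x hx k hk)
  -- quasiperiodic relation for W
  have hWshift : W 1 = W 0 + 2 * Real.pi * I := by
    have hθpos : 0 < 2 * Real.pi / n := by positivity
    have hθle : 2 * Real.pi / n ≤ 2 * Real.pi / 5 := by
      apply div_le_div_of_nonneg_left (by positivity) (by norm_num)
      exact_mod_cast hn5
    have hθltpi : 2 * Real.pi / n < Real.pi := by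
      have : 2 * Real.pi / 5 < Real.pi := by nlinarith [Real.pi_pos]
      linarith
    set c : ℂ := Complex.exp ((2 * Real.pi / n : ℝ) * I) with hc
    have hcne : c ≠ 0 := Complex.exp_ne_zero _
    have hlogc : Complex.log c = ((2 * Real.pi / n : ℝ) : ℂ) * I := by
      apply Complex.log_exp
      · simp only [Complex.mul_I_im, Complex.ofReal_re]
        linarith
      · simp only [Complex.mul_I_im, Complex.ofReal_re]
        linarith
    have hargc : Complex.arg c = 2 * Real.pi / n := by
      have := congrArg Complex.im hlogc
      rwa [Complex.log_im, Complex.mul_I_im, Complex.ofReal_re] at this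
    have hterm : ∀ k < n, Complex.log (r k 1) =
        ((2 * Real.pi / n : ℝ) : ℂ) * I + Complex.log (r k 0) := by
      intro k hk
      have h01 : (0:ℝ) ∈ Set.Icc (0:ℝ) 1 := by norm_num
      have hrel : r k 1 = c * r k 0 := by
        simp only [hr]
        have e1 : F 1 (((k:ℝ)+1)/n) =
            Complex.exp (2 * Real.pi * I * ((((k:ℝ)+1)/n) : ℝ)) * F 0 (((k:ℝ)+1)/n) := by
          have := hq1 0 ((((k:ℝ)+1)/n))
          simpa using this
        have e0 : F 1 ((k:ℝ)/n) =
            Complex.exp (2 * Real.pi * I * (((k:ℝ)/n) : ℝ)) * F 0 ((k:ℝ)/n) := by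
          have := hq1 0 (((k:ℝ)/n))
          simpa using this
        rw [e1, e0, hc]
        rw [mul_div_mul_comm]
        rw [← Complex.exp_sub]
        congr 1
        push_cast
        field_simp
        ring
      rw [hrel]
      rw [Complex.log_mul hcne (hrne k 0) ?_, hlogc]
      rw [hargc]
      have harg0 : |Complex.arg (r k 0)| < Real.pi / 2 :=
        Complex.abs_arg_lt_pi_div_two_iff.mpr (Or.inl (hre 0 h01 k hk))
      have := abs_lt.mp harg0
      constructor
      · linarith [Real.pi_pos]
      · have h25 : 2 * Real.pi / n ≤ 2 * Real.pi / 5 := hθle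
        nlinarith [Real.pi_pos]
    simp only [hW]
    rw [Finset.sum_congr rfl (fun k hk => hterm k (Finset.mem_range.mp hk))]
    rw [Finset.sum_add_distrib, Finset.sum_const, Finset.card_range]
    rw [nsmul_eq_mul]
    push_cast
    have hnne : (n:ℂ) ≠ 0 := by exact_mod_cast ne_of_gt hnpos
    field_simp
    ring
  -- IVT contradiction
  obtain ⟨j₀, hj₀⟩ := hint 0
  have hg0 : (W 0).im = 2 * Real.pi * j₀ := by
    rw [hj₀]
    simp
    try ring
  have hg1 : (W 1).im = 2 * Real.pi * j₀ + 2 * Real.pi := by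
    rw [hWshift]
    simp [hg0]
  have hgc : ContinuousOn (fun x => (W x).im) (Set.Icc (0:ℝ) 1) :=
    Complex.continuous_im.comp_continuousOn hWcont
  have hy : (2 * Real.pi * j₀ + Real.pi) ∈
      Set.Icc ((fun x => (W x).im) 0) ((fun x => (W x).im) 1) := by
    simp only [hg0, hg1]
    constructor
    · linarith [Real.pi_pos]
    · linarith [Real.pi_pos]
  obtain ⟨x, hxmem, hx⟩ := intermediate_value_Icc (by norm_num : (0:ℝ) ≤ 1) hgc hy
  obtain ⟨j, hj⟩ := hint x
  have himx : (W x).im = 2 * Real.pi * j := by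
    rw [hj]; simp; try ring
  have hx' : (W x).im = 2 * Real.pi * j₀ + Real.pi := hx
  rw [himx] at hx'
  have hpi := Real.pi_pos
  have : (2 * (j:ℝ)) = 2 * (j₀:ℝ) + 1 := by
    nlinarith [hx']
  have : (2 * j : ℤ) = 2 * j₀ + 1 := by exact_mod_cast this
  omega
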